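/- There exists a unique x < 0 such that the tail conditional variance Var[X | X < x] equals the central conditional variance Var[X | x < X < -x] for a standard normal X; equivalently, there is a unique negative solution of the equation -xΦ(x) = φ(x)(1 - 2Φ(x)). -/

import Mathlib

open MeasureTheory Real

/-- Standard normal density. -/
noncomputable def stdPdf (x : ℝ) : ℝ := (Real.sqrt (2 * Real.pi))⁻¹ * Real.exp (-x ^ 2 / 2)

/-- Standard normal distribution function. -/
noncomputable def stdCdf (x : ℝ) : ℝ := ∫ t in Set.Iic x, stdPdf t

open Set Filter Topology

lemma sqrt2pi_pos : 0 < Real.sqrt (2 * Real.pi) := Real.sqrt_pos.2 (by positivity)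

lemma stdPdf_pos (x : ℝ) : 0 < stdPdf x := by
  unfold stdPdf; positivity

lemma stdPdf_eq' : stdPdf = fun x => (Real.sqrt (2 * Real.pi))⁻¹ * Real.exp (-(1/2) * x ^ 2) := by
  funext x; unfold stdPdf; ring_nf

lemma integrable_stdPdf : Integrable stdPdf := by
  rw [stdPdf_eq']
  exact (integrable_exp_neg_mul_sq (by norm_num)).const_mul _

lemma continuous_stdPdf : Continuous stdPdf := by
  unfold stdPdf; continuity

lemma stdPdf_le (x : ℝ) : stdPdf x ≤ (Real.sqrt (2 * Real.pi))⁻¹ := by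
  unfold stdPdf
  nth_rewrite 2 [(by simp : (Real.sqrt (2 * Real.pi))⁻¹ = (Real.sqrt (2 * Real.pi))⁻¹ * 1)]
  have h1 : Real.exp (-x ^ 2 / 2) ≤ 1 := by
    rw [← Real.exp_zero]; apply Real.exp_le_exp.2; nlinarith [sq_nonneg x]
  have h2 : (0:ℝ) < (Real.sqrt (2 * Real.pi))⁻¹ := by positivity
  nlinarith

lemma stdPdf_even (x : ℝ) : stdPdf (-x) = stdPdf x := by unfold stdPdf; ring_nf

lemma integral_stdPdf : ∫ x, stdPdf x = 1 := by
  rw [stdPdf_eq', integral_const_mul, integral_gaussian]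
  rw [show (π / (1/2) : ℝ) = 2 * π by ring]
  exact inv_mul_cancel₀ (ne_of_gt sqrt2pi_pos)

lemma stdCdf_sub (a b : ℝ) : stdCdf b - stdCdf a = ∫ x in a..b, stdPdf x :=
  intervalIntegral.integral_Iic_sub_Iic integrable_stdPdf.integrableOn integrable_stdPdf.integrableOn

lemma hasDerivAt_stdCdf (x : ℝ) : HasDerivAt stdCdf (stdPdf x) x := by
  have h : HasDerivAt (fun u => ∫ t in (0:ℝ)..u, stdPdf t) (stdPdf x) x :=
    intervalIntegral.integral_hasDerivAt_right integrable_stdPdf.intervalIntegrable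
      continuous_stdPdf.aestronglyMeasurable.stronglyMeasurableAtFilter
      continuous_stdPdf.continuousAt
  have : stdCdf = fun y => stdCdf 0 + ∫ t in (0:ℝ)..y, stdPdf t := by
    funext y; rw [← stdCdf_sub]; ring
  rw [this]
  simpa using (h.const_add (stdCdf 0))

lemma continuous_stdCdf : Continuous stdCdf := by
  rw [continuous_iff_continuousAt]
  exact fun x => (hasDerivAt_stdCdf x).continuousAt

lemma stdCdf_strictMono : StrictMono stdCdf := by
  intro a b hab
  have h : 0 < ∫ x in a..b, stdPdf x :=
    intervalIntegral.intervalIntegral_pos_of_pos_on integrable_stdPdf.intervalIntegrable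
      (fun x _ => stdPdf_pos x) hab
  have := stdCdf_sub a b
  linarith

lemma stdCdf_nonneg (x : ℝ) : 0 ≤ stdCdf x :=
  setIntegral_nonneg measurableSet_Iic (fun t _ => (stdPdf_pos t).le)

lemma stdCdf_pos (x : ℝ) : 0 < stdCdf x :=
  lt_of_le_of_lt (stdCdf_nonneg (x-1)) (stdCdf_strictMono (by linarith))

lemma stdCdf_zero : stdCdf 0 = 1/2 := by
  have hsym : stdCdf 0 = ∫ x in Ioi (0:ℝ), stdPdf x := by
    unfold stdCdf
    rw [show (0:ℝ) = -0 by ring, ← integral_comp_neg_Ioi]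
    simp [stdPdf_even]
  have htot : stdCdf 0 + ∫ x in Ioi (0:ℝ), stdPdf x = 1 := by
    unfold stdCdf
    rw [intervalIntegral.integral_Iic_add_Ioi integrable_stdPdf.integrableOn integrable_stdPdf.integrableOn]
    exact integral_stdPdf
  linarith [hsym, htot]

lemma stdCdf_lt_half {x : ℝ} (hx : x < 0) : stdCdf x < 1/2 := by
  rw [← stdCdf_zero]; exact stdCdf_strictMono hx

lemma hasDerivAt_stdPdf (x : ℝ) : HasDerivAt stdPdf (-x * stdPdf x) x := by
  have h1 : HasDerivAt (fun t : ℝ => -t ^ 2 / 2) (-x) x := by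
    have h0 := ((hasDerivAt_pow 2 x).neg).div_const 2
    refine h0.congr_deriv ?_
    simp
    ring
  have h2 : HasDerivAt (fun t : ℝ => Real.exp (-t ^ 2 / 2))
      (Real.exp (-x ^ 2 / 2) * (-x)) x := (Real.hasDerivAt_exp _).comp x h1
  have h3 := h2.const_mul ((Real.sqrt (2 * Real.pi))⁻¹)
  unfold stdPdf
  refine h3.congr_deriv ?_
  ring

lemma sq_tendsto_atTop : Tendsto (fun x : ℝ => x ^ 2) atBot atTop := by
  have h : Tendsto (fun x : ℝ => (-x) ^ 2) atBot atTop :=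
    (tendsto_pow_atTop (by norm_num : (2:ℕ) ≠ 0)).comp tendsto_neg_atBot_atTop
  exact h.congr (fun x => by ring)

lemma tendsto_stdPdf_atBot : Tendsto stdPdf atBot (𝓝 0) := by
  have h : Tendsto (fun x : ℝ => -x ^ 2 / 2) atBot atBot := by
    apply Tendsto.atBot_div_const (by norm_num)
    exact (tendsto_neg_atTop_atBot).comp sq_tendsto_atTop
  have := Real.tendsto_exp_atBot.comp h
  have h2 := this.const_mul ((Real.sqrt (2 * Real.pi))⁻¹)
  rw [mul_zero] at h2
  exact h2.congr (fun x => by simp [stdPdf, Function.comp])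

lemma integrable_id_mul_stdPdf : Integrable (fun t : ℝ => t * stdPdf t) := by
  rw [stdPdf_eq']
  have h := (integrable_mul_exp_neg_mul_sq (by norm_num : (0:ℝ) < 1/2)).const_mul
    ((Real.sqrt (2 * Real.pi))⁻¹)
  have heq : (fun t : ℝ => t * ((Real.sqrt (2 * Real.pi))⁻¹ * Real.exp (-(1/2) * t ^ 2)))
      = fun t : ℝ => (Real.sqrt (2 * Real.pi))⁻¹ * (t * Real.exp (-(1/2) * t ^ 2)) := by
    funext t; ring
  rw [heq]; exact h

lemma integral_Iic_id_mul_stdPdf (x : ℝ) : ∫ t in Iic x, t * stdPdf t = -stdPdf x - 0 := by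
  apply integral_Iic_of_hasDerivAt_of_tendsto' (f := fun t => -stdPdf t)
  · intro t _
    have := (hasDerivAt_stdPdf t).neg
    simp at this; exact this
  · exact integrable_id_mul_stdPdf.integrableOn
  · have := tendsto_stdPdf_atBot.neg
    rwa [neg_zero] at this

lemma stdCdf_le_mills {x : ℝ} (hx : x < 0) : stdCdf x ≤ stdPdf x / (-x) := by
  have hxne : x ≠ 0 := ne_of_lt hx
  have hmono : stdCdf x ≤ ∫ t in Iic x, (t / x) * stdPdf t := by
    apply setIntegral_mono_on integrable_stdPdf.integrableOn
    · have h : IntegrableOn (fun t : ℝ => (1/x) * (t * stdPdf t)) (Iic x) :=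
        (integrable_id_mul_stdPdf.integrableOn).const_mul _
      exact h.congr_fun (fun t _ => by ring) measurableSet_Iic
    · exact measurableSet_Iic
    · intro t ht
      have ht' : t ≤ x := ht
      have h1 : (1:ℝ) ≤ t / x := by
        rw [le_div_iff_of_neg hx]
        simpa using ht'
      nlinarith [stdPdf_pos t]
  have hval : ∫ t in Iic x, (t / x) * stdPdf t = stdPdf x / (-x) := by
    have heq : (fun t : ℝ => (t / x) * stdPdf t) = fun t => (1/x) * (t * stdPdf t) :=
      funext fun t => by ring
    rw [heq, integral_const_mul, integral_Iic_id_mul_stdPdf, sub_zero, div_neg, eq_neg_iff_add_eq_zero]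
    field_simp
    ring

  linarith

lemma tendsto_stdCdf_atBot : Tendsto stdCdf atBot (𝓝 0) := by
  apply tendsto_of_tendsto_of_tendsto_of_le_of_le' tendsto_const_nhds tendsto_stdPdf_atBot
  · filter_upwards with x using stdCdf_nonneg x
  · filter_upwards [eventually_le_atBot (-1:ℝ)] with x hx
    have hx0 : x < 0 := by linarith
    calc stdCdf x ≤ stdPdf x / (-x) := stdCdf_le_mills hx0
    _ ≤ stdPdf x / 1 := by
        apply div_le_div_of_nonneg_left (stdPdf_pos x).le (by norm_num) (by linarith)
    _ = stdPdf x := by ring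

lemma exp_cubic_le (u : ℝ) (hu : 0 ≤ u) : 1 + u + u^2/2 + u^3/6 ≤ Real.exp u := by
  have h := Real.sum_le_exp_of_nonneg hu 4
  have : ∑ i ∈ Finset.range 4, u ^ i / (Nat.factorial i) = 1 + u + u^2/2 + u^3/6 := by
    norm_num [Finset.sum_range_succ, Nat.factorial]
  linarith [h, this.symm.le]

lemma exp_quad_le (u : ℝ) (hu : 0 ≤ u) : 1 + u + u^2/2 ≤ Real.exp u := by
  nlinarith [exp_cubic_le u hu, pow_nonneg hu 3]

lemma exp_neg_ub {u : ℝ} (hu : 0 ≤ u) : Real.exp (-u) ≤ 1 - u + u^2/2 := by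
  have hA : (0:ℝ) < 1 + u + u^2/2 := by positivity
  have h1 : (Real.exp u)⁻¹ ≤ (1 + u + u^2/2)⁻¹ := by
    apply inv_anti₀ hA (exp_quad_le u hu)
  have h2 : (1 + u + u^2/2)⁻¹ ≤ 1 - u + u^2/2 := by
    rw [inv_eq_one_div, div_le_iff₀ hA]
    nlinarith [pow_nonneg hu 4]
  rw [Real.exp_neg]
  linarith

lemma hasDerivAt_exp_neg (v : ℝ) : HasDerivAt (fun w : ℝ => Real.exp (-w)) (-Real.exp (-v)) v := by
  have h := (Real.hasDerivAt_exp (-v)).comp v (hasDerivAt_neg v)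
  simp at h; exact h

lemma exp_neg_lb3 {u : ℝ} (hu : 0 ≤ u) : 1 - u + u^2/2 - u^3/6 ≤ Real.exp (-u) := by
  have hderiv : ∀ v : ℝ, HasDerivAt (fun w : ℝ => Real.exp (-w) - (1 - w + w^2/2 - w^3/6))
      (-Real.exp (-v) + (1 - v + v^2/2)) v := by
    intro v
    have h2 : HasDerivAt (fun w : ℝ => w^2/2) v v := by
      have := (hasDerivAt_pow 2 v).div_const 2
      refine this.congr_deriv ?_
      simp
    have h3 : HasDerivAt (fun w : ℝ => w^3/6) (v^2/2) v := by
      have := (hasDerivAt_pow 3 v).div_const 6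
      refine this.congr_deriv ?_
      ring
    have hp : HasDerivAt (fun w : ℝ => 1 - w + w^2/2 - w^3/6) (-1 + v - v^2/2) v := by
      have := (((hasDerivAt_const v (1:ℝ)).sub (hasDerivAt_id v)).add h2).sub h3
      refine this.congr_deriv ?_
      ring
    have := (hasDerivAt_exp_neg v).sub hp
    refine this.congr_deriv ?_
    ring
  have hmono : MonotoneOn (fun w : ℝ => Real.exp (-w) - (1 - w + w^2/2 - w^3/6)) (Ici 0) := by
    apply monotoneOn_of_deriv_nonneg (convex_Ici 0)
    · exact (Continuous.sub (by continuity) (by continuity)).continuousOn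
    · intro v _
      exact (hderiv v).differentiableAt.differentiableWithinAt
    · intro v hv
      rw [interior_Ici] at hv
      rw [(hderiv v).deriv]
      have := exp_neg_ub (le_of_lt hv)
      linarith
  have h := hmono (self_mem_Ici) hu hu
  simp at h
  linarith

lemma exp_neg_lb1 (u : ℝ) : 1 - u ≤ Real.exp (-u) := by
  have := Real.add_one_le_exp (-u)
  linarith

noncomputable def K : ℝ := (Real.sqrt (2 * Real.pi))⁻¹

lemma K_pos : 0 < K := by unfold K; positivity

lemma stdPdf_K (x : ℝ) : stdPdf x = K * Real.exp (-x ^ 2 / 2) := rfl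

lemma sqrt2pi_sq : (Real.sqrt (2 * Real.pi)) ^ 2 = 2 * Real.pi := by
  rw [sq]; exact Real.mul_self_sqrt (by positivity)

lemma sqrt2pi_lb : (5/2 : ℝ) ≤ Real.sqrt (2 * Real.pi) := by
  nlinarith [sqrt2pi_sq, sqrt2pi_pos, Real.pi_gt_d6]

lemma sqrt2pi_ub : Real.sqrt (2 * Real.pi) ≤ 2.51 := by
  nlinarith [sqrt2pi_sq, sqrt2pi_pos, Real.pi_lt_d2]

lemma K_ub : K ≤ 2/5 := by
  unfold K
  rw [inv_le_comm₀ sqrt2pi_pos (by norm_num)]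
  calc (2/5 : ℝ)⁻¹ = 5/2 := by norm_num
  _ ≤ Real.sqrt (2 * Real.pi) := sqrt2pi_lb

lemma K_lb : (0.3984 : ℝ) ≤ K := by
  unfold K
  rw [le_inv_comm₀ (by norm_num) sqrt2pi_pos]
  calc Real.sqrt (2*Real.pi) ≤ 2.51 := sqrt2pi_ub
  _ ≤ 0.3984⁻¹ := by norm_num

noncomputable def g (x : ℝ) : ℝ := -x * stdCdf x - stdPdf x * (1 - 2 * stdCdf x)

lemma cdf_diff_ub {x : ℝ} (hx : x ≤ 0) : stdCdf 0 - stdCdf x ≤ K * (-x) := by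
  rw [stdCdf_sub x 0]
  have h : ∫ s in x..(0:ℝ), stdPdf s ≤ ∫ s in x..(0:ℝ), K := by
    apply intervalIntegral.integral_mono_on hx integrable_stdPdf.intervalIntegrable
      intervalIntegrable_const
    intro s _
    exact stdPdf_le s
  rw [intervalIntegral.integral_const] at h
  calc (∫ s in x..(0:ℝ), stdPdf s) ≤ (0 - x) • K := h
  _ = K * (-x) := by simp [smul_eq_mul]; ring

lemma right_region {x : ℝ} (h1 : -1/2 ≤ x) (h2 : x < 0) : 0 < g x := by
  set I := stdCdf 0 - stdCdf x with hI
  have hIub : I ≤ K * (-x) := cdf_diff_ub h2.le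
  have hI0 : 0 ≤ I := by
    have := stdCdf_strictMono h2
    simp [hI]; linarith
  have hΦ : stdCdf x = 1/2 - I := by rw [hI, stdCdf_zero]; ring
  have hgeq : g x = -x/2 - I * ((-x) + 2 * stdPdf x) := by
    unfold g; rw [hΦ]; ring
  have hφub : stdPdf x ≤ K * (1 - x^2/2 + x^4/8) := by
    rw [stdPdf_K]
    have h := exp_neg_ub (u := x^2/2) (by positivity)
    have : 1 - x^2/2 + (x^2/2)^2/2 = 1 - x^2/2 + x^4/8 := by ring
    rw [this] at h
    have : -x^2/2 = -(x^2/2) := by ring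
    rw [this]
    nlinarith [K_pos]
  have hkey : K * ((-x) + 2 * (K * (1 - x^2/2 + x^4/8))) < 1/2 := by
    have hK1 : K ≤ 2/5 := K_ub
    have hK0 : (0:ℝ) < K := K_pos
    have hx2 : x^2 ≤ 1/4 := by nlinarith
    have hx4 : x^4 ≤ x^2/4 := by nlinarith [sq_nonneg x]
    have ht : (0:ℝ) ≤ 1/2 + x := by linarith
    have hmix : 0 ≤ (1/2 + x) * (K - (15/16)*K^2*(1/2 - x)) := by
      apply mul_nonneg ht
      nlinarith [mul_pos hK0 hK0]
    nlinarith [hmix, mul_pos hK0 hK0, mul_nonneg (mul_pos hK0 hK0).le (by nlinarith : (0:ℝ) ≤ 1/4 - x^2),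
      mul_nonneg (mul_pos hK0 hK0).le (sub_nonneg.2 hx4)]
  have hφ0 : 0 < stdPdf x := stdPdf_pos x
  have hsum : 0 < (-x) + 2 * stdPdf x := by nlinarith
  have hfin : I * ((-x) + 2 * stdPdf x) < -x/2 := by
    calc I * ((-x) + 2 * stdPdf x) ≤ (K * (-x)) * ((-x) + 2 * stdPdf x) := by
          apply mul_le_mul_of_nonneg_right hIub hsum.le
    _ ≤ (K * (-x)) * ((-x) + 2 * (K * (1 - x^2/2 + x^4/8))) := by
          apply mul_le_mul_of_nonneg_left _ (by nlinarith [K_pos])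
          nlinarith
    _ = (-x) * (K * ((-x) + 2 * (K * (1 - x^2/2 + x^4/8)))) := by ring
    _ < (-x) * (1/2) := by
          apply mul_lt_mul_of_pos_left hkey (by linarith)
    _ = -x/2 := by ring
  rw [hgeq]; linarith

lemma tendsto_stdPdf_atTop : Tendsto stdPdf atTop (𝓝 0) := by
  have h := tendsto_stdPdf_atBot.comp tendsto_neg_atTop_atBot
  exact h.congr (fun x => stdPdf_even x)

noncomputable def ub (s : ℝ) : ℝ := 4 * stdPdf s / (3*s + Real.sqrt (s^2+8))

lemma W_pos (s : ℝ) : 0 < Real.sqrt (s^2+8) := Real.sqrt_pos.2 (by positivity)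

lemma W_sq (s : ℝ) : (Real.sqrt (s^2+8))^2 = s^2+8 := by
  rw [sq]; exact Real.mul_self_sqrt (by positivity)

lemma hasDerivAt_ub {s : ℝ} (hs : 0 < s) : HasDerivAt ub
    ((4*(-s*stdPdf s) * (3*s + Real.sqrt (s^2+8)) - 4*stdPdf s * (3 + s / Real.sqrt (s^2+8)))
      / (3*s + Real.sqrt (s^2+8))^2) s := by
  have hW := W_pos s
  have hsq : HasDerivAt (fun w : ℝ => w^2+8) (2*s) s := by
    simpa using (hasDerivAt_pow 2 s).add_const 8
  have hsqrt : HasDerivAt (fun w : ℝ => Real.sqrt (w^2+8)) (s / Real.sqrt (s^2+8)) s := by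
    have h := (Real.hasDerivAt_sqrt (by positivity : (s:ℝ)^2+8 ≠ 0)).comp s hsq
    refine h.congr_deriv ?_
    field_simp
  have hden : HasDerivAt (fun w : ℝ => 3*w + Real.sqrt (w^2+8)) (3 + s / Real.sqrt (s^2+8)) s := by
    have h3 : HasDerivAt (fun w : ℝ => 3*w) 3 s := by
      simpa using (hasDerivAt_id s).const_mul (3:ℝ)
    exact h3.add hsqrt
  have hnum : HasDerivAt (fun w : ℝ => 4 * stdPdf w) (4 * (-s * stdPdf s)) s :=
    (hasDerivAt_stdPdf s).const_mul 4
  have hden_ne : 3*s + Real.sqrt (s^2+8) ≠ 0 := by positivity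
  exact hnum.div hden hden_ne

lemma key_ineq {s : ℝ} (hs : 0 < s) : s*(s^2+6) ≤ Real.sqrt (s^2+8)*(s^2+2) := by
  set W := Real.sqrt (s^2+8) with hW
  have hWpos : 0 < W := W_pos s
  have hW2 : W^2 = s^2+8 := W_sq s
  have h32 : (W*(s^2+2))^2 - (s*(s^2+6))^2 = 32 := by
    linear_combination ((s^2+2)^2) * hW2
  nlinarith [h32, mul_pos hWpos (by positivity : (0:ℝ) < s^2+2),
    mul_pos hs (by positivity : (0:ℝ) < s^2+6)]

lemma ub_deriv_le {s : ℝ} (hs : 0 < s) :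
    (4*(-s*stdPdf s) * (3*s + Real.sqrt (s^2+8)) - 4*stdPdf s * (3 + s / Real.sqrt (s^2+8)))
      / (3*s + Real.sqrt (s^2+8))^2 ≤ -stdPdf s := by
  set W := Real.sqrt (s^2+8) with hWdef
  set φ := stdPdf s with hφdef
  have hWpos : 0 < W := W_pos s
  have hW2 : W^2 = s^2+8 := W_sq s
  have hφpos : 0 < φ := stdPdf_pos s
  have hDpos : 0 < 3*s + W := by positivity
  rw [div_le_iff₀ (by positivity)]
  rw [← mul_le_mul_iff_of_pos_right hWpos]
  have e1 : (4*(-s*φ)*(3*s+W) - 4*φ*(3 + s/W))*W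
      = 4*(-s*φ)*(3*s+W)*W - (12*φ*W + 4*φ*s) := by
    field_simp
    ring
  rw [e1]
  have hid : -φ*(3*s+W)^2*W - (4*(-s*φ)*(3*s+W)*W - (12*φ*W + 4*φ*s))
      = 2*φ*(W*(s^2+2) - s*(s^2+6)) := by
    linear_combination (-φ*W - 2*s*φ) * hW2
  have hk : 0 ≤ 2*φ*(W*(s^2+2) - s*(s^2+6)) :=
    mul_nonneg (by positivity) (sub_nonneg.2 (key_ineq hs))
  linarith [hid, hk]

lemma hasDerivAt_boyd_h {s : ℝ} (hs : 0 < s) :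
    HasDerivAt (fun w => ub w - stdCdf (-w))
      ((4*(-s*stdPdf s) * (3*s + Real.sqrt (s^2+8)) - 4*stdPdf s * (3 + s / Real.sqrt (s^2+8)))
        / (3*s + Real.sqrt (s^2+8))^2 + stdPdf s) s := by
  have h1 := hasDerivAt_ub hs
  have h2 : HasDerivAt (fun w : ℝ => stdCdf (-w)) (-stdPdf s) s := by
    have h := (hasDerivAt_stdCdf (-s)).comp s (hasDerivAt_neg s)
    have he : stdPdf (-s) * (-1) = -stdPdf s := by rw [stdPdf_even]; ring
    rw [← he]
    exact h
  have := h1.sub h2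
  refine this.congr_deriv ?_
  ring

lemma tendsto_boyd_h : Tendsto (fun w => ub w - stdCdf (-w)) atTop (𝓝 0) := by
  have h0 : Tendsto (fun s : ℝ => 2 * stdPdf s) atTop (𝓝 0) := by
    have := tendsto_stdPdf_atTop.const_mul (2:ℝ)
    simpa using this
  have h1 : Tendsto ub atTop (𝓝 0) := by
    apply tendsto_of_tendsto_of_tendsto_of_le_of_le' tendsto_const_nhds h0
    · filter_upwards [eventually_ge_atTop (1:ℝ)] with s hs
      unfold ub
      apply div_nonneg (by nlinarith [stdPdf_pos s])
      have := Real.sqrt_nonneg (s^2+8)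
      linarith
    · filter_upwards [eventually_ge_atTop (1:ℝ)] with s hs
      unfold ub
      have hW := W_pos s
      rw [div_le_iff₀ (by linarith)]
      nlinarith [stdPdf_pos s]
  have h2 : Tendsto (fun w : ℝ => stdCdf (-w)) atTop (𝓝 0) :=
    tendsto_stdCdf_atBot.comp tendsto_neg_atTop_atBot
  simpa using h1.sub h2

lemma boyd {t : ℝ} (ht : 1 ≤ t) : stdCdf (-t) ≤ ub t := by
  have hanti : AntitoneOn (fun w => ub w - stdCdf (-w)) (Ici t) := by
    apply antitoneOn_of_deriv_nonpos (convex_Ici t)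
    · intro s hs
      have hs0 : 0 < s := lt_of_lt_of_le (by linarith) hs.out
      exact (hasDerivAt_boyd_h hs0).continuousAt.continuousWithinAt
    · intro s hs
      rw [interior_Ici] at hs
      have hs0 : 0 < s := lt_trans (by linarith) hs.out
      exact (hasDerivAt_boyd_h hs0).differentiableAt.differentiableWithinAt
    · intro s hs
      rw [interior_Ici] at hs
      have hs0 : 0 < s := lt_trans (by linarith) hs.out
      rw [(hasDerivAt_boyd_h hs0).deriv]
      have := ub_deriv_le hs0
      linarith
  have hle : (0:ℝ) ≤ ub t - stdCdf (-t) := by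
    apply le_of_tendsto tendsto_boyd_h
    filter_upwards [eventually_ge_atTop t] with s hs
    exact hanti self_mem_Ici hs hs
  linarith

lemma left_region {x : ℝ} (hx : x ≤ -1) : g x < 0 := by
  set t := -x with htdef
  have ht : 1 ≤ t := by simp [htdef]; linarith
  set W := Real.sqrt (t^2+8) with hWdef
  have hWpos : 0 < W := W_pos t
  have hW2 : W^2 = t^2+8 := W_sq t
  have hφeq : stdPdf x = stdPdf t := by rw [htdef, stdPdf_even]
  set φ := stdPdf t with hφdef
  have hφpos : 0 < φ := stdPdf_pos t
  have hΦeq : stdCdf x = stdCdf (-t) := by rw [htdef, neg_neg]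
  have hB : stdCdf (-t) ≤ 4*φ/(3*t+W) := boyd ht
  -- φ * (t + W) < 1
  have hexp : 1 + t^2/2 + t^4/8 ≤ Real.exp (t^2/2) := by
    have h := exp_quad_le (t^2/2) (by positivity)
    calc 1 + t^2/2 + t^4/8 = 1 + t^2/2 + (t^2/2)^2/2 := by ring
    _ ≤ Real.exp (t^2/2) := h
  have hW17 : W ≤ (t^2+17)/6 := by
    nlinarith [sq_nonneg (W-3), hW2]
  have hφW : φ * (t + W) < 1 := by
    have hφval : φ * Real.exp (t^2/2) = K := by
      rw [hφdef, stdPdf_K, mul_assoc, ← Real.exp_add]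
      rw [show -t^2/2 + t^2/2 = 0 by ring, Real.exp_zero, mul_one]
    have hKb : K * (t + W) < 1 + t^2/2 + t^4/8 := by
      have h1 : K * (t + W) ≤ (2/5) * (t + (t^2+17)/6) := by
        apply mul_le_mul K_ub _ (by positivity) (by norm_num)
        linarith
      have h2 : (2/5 : ℝ) * (t + (t^2+17)/6) < 1 + t^2/2 + t^4/8 := by
        nlinarith [sq_nonneg (t-1), sq_nonneg (t+1), sq_nonneg (t^2-1)]
      linarith
    have hexp_pos : (0:ℝ) < Real.exp (t^2/2) := Real.exp_pos _
    -- φ(t+W) * exp(t²/2) = K(t+W) < 1+t²/2+t⁴/8 ≤ exp(t²/2)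
    have : φ * (t + W) * Real.exp (t^2/2) < 1 * Real.exp (t^2/2) := by
      calc φ * (t + W) * Real.exp (t^2/2) = K * (t + W) := by rw [← hφval]; ring
      _ < 1 + t^2/2 + t^4/8 := hKb
      _ ≤ Real.exp (t^2/2) := hexp
      _ = 1 * Real.exp (t^2/2) := by ring
    exact lt_of_mul_lt_mul_right this hexp_pos.le
  -- 8φ < W - t
  have h8 : 8*φ < W - t := by
    have hWt : 0 < W + t := by linarith
    have h1 : 8*φ*(W+t) < 8 := by nlinarith
    have h2 : (W-t)*(W+t) = 8 := by nlinarith [hW2]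
    nlinarith
  -- Φ(t+2φ) < φ
  have hΦ : stdCdf (-t) * (t + 2*φ) < φ := by
    have hpos : 0 < t + 2*φ := by positivity
    have hD : 0 < 3*t + W := by positivity
    calc stdCdf (-t) * (t + 2*φ) ≤ (4*φ/(3*t+W)) * (t + 2*φ) :=
          mul_le_mul_of_nonneg_right hB hpos.le
    _ < φ := by
        rw [div_mul_eq_mul_div, div_lt_iff₀ hD]
        nlinarith
  unfold g
  rw [hΦeq, hφeq]
  have hx_eq : -x = t := by rw [htdef]
  rw [hx_eq]
  nlinarith [hΦ]

noncomputable def B4 (q : ℝ) : ℝ := q - q^3/6 + q^5/40 - q^7/336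
noncomputable def A4 (q : ℝ) : ℝ := 1 - q^2/2 + q^4/8 - q^6/48

lemma stdPdf_taylor_lb (s : ℝ) : K * (1 - s^2/2 + s^4/8 - s^6/48) ≤ stdPdf s := by
  rw [stdPdf_K]
  have h := exp_neg_lb3 (u := s^2/2) (by positivity)
  have he : 1 - s^2/2 + (s^2/2)^2/2 - (s^2/2)^3/6 = 1 - s^2/2 + s^4/8 - s^6/48 := by ring
  rw [he] at h
  have he2 : -s^2/2 = -(s^2/2) := by ring
  rw [he2]
  nlinarith [K_pos]

lemma cdf_taylor {q : ℝ} (hq : 0 ≤ q) :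
    K * B4 q ≤ stdCdf 0 - stdCdf (-q) := by
  rw [stdCdf_sub (-q) 0]
  have hF : ∀ s : ℝ, HasDerivAt (fun w : ℝ => K * (w - w^3/6 + w^5/40 - w^7/336))
      (K * (1 - s^2/2 + s^4/8 - s^6/48)) s := by
    intro s
    have h := ((((hasDerivAt_id s).sub ((hasDerivAt_pow 3 s).div_const 6)).add
      ((hasDerivAt_pow 5 s).div_const 40)).sub ((hasDerivAt_pow 7 s).div_const 336)).const_mul K
    refine h.congr_deriv ?_
    push_cast
    ring
  have hval : ∫ s in (-q)..(0:ℝ), K * (1 - s^2/2 + s^4/8 - s^6/48) = K * B4 q := by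
    rw [intervalIntegral.integral_eq_sub_of_hasDerivAt (fun s _ => hF s)]
    · unfold B4; ring
    · apply Continuous.intervalIntegrable
      continuity
  rw [← hval]
  apply intervalIntegral.integral_mono_on (by linarith)
  · apply Continuous.intervalIntegrable; continuity
  · exact integrable_stdPdf.intervalIntegrable
  · intro s _
    exact stdPdf_taylor_lb s

lemma mid_step {t1 t2 x : ℝ} (ht1 : 0 < t1) (ht12 : t1 ≤ t2)
    (hx1 : -t2 ≤ x) (hx2 : x ≤ -t1)
    (hB4 : 0 ≤ B4 t1) (hA4 : 0 ≤ A4 t2)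
    (hD : 0 ≤ 1 - 2*t1*(0.3984*A4 t2))
    (hnum : (1/2 - 0.3984*B4 t1) * (1 - 2*t1*(0.3984*A4 t2)) < 2*(0.3984*A4 t2)^2) :
    stdCdf x * (1 + 2*x*stdPdf x) < 2*stdPdf x^2 := by
  have hΦ0 : 0 ≤ stdCdf x := stdCdf_nonneg x
  have hΦU : stdCdf x ≤ 1/2 - 0.3984 * B4 t1 := by
    have h1 : stdCdf x ≤ stdCdf (-t1) := (stdCdf_strictMono.monotone (by linarith))
    have h2 := cdf_taylor ht1.le
    have h3 : K * B4 t1 ≥ 0.3984 * B4 t1 := mul_le_mul_of_nonneg_right K_lb hB4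
    have h0 := stdCdf_zero
    linarith
  have hφL : 0.3984 * A4 t2 ≤ stdPdf x := by
    have hx2sq : x^2 ≤ t2^2 := by nlinarith
    have hmono : Real.exp (-t2^2/2) ≤ Real.exp (-x^2/2) := by
      apply Real.exp_le_exp.2; linarith
    have htay : A4 t2 ≤ Real.exp (-t2^2/2) := by
      have h := exp_neg_lb3 (u := t2^2/2) (by positivity)
      have he : 1 - t2^2/2 + (t2^2/2)^2/2 - (t2^2/2)^3/6 = A4 t2 := by unfold A4; ring
      rw [he] at h
      have he2 : -t2^2/2 = -(t2^2/2) := by ring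
      rw [he2]
      exact h
    have hexp0 : 0 ≤ Real.exp (-x^2/2) := (Real.exp_pos _).le
    rw [stdPdf_K]
    calc 0.3984 * A4 t2 ≤ 0.3984 * Real.exp (-x^2/2) := by
          apply mul_le_mul_of_nonneg_left _ (by norm_num)
          linarith
    _ ≤ K * Real.exp (-x^2/2) := mul_le_mul_of_nonneg_right K_lb hexp0
  have hφ0 : 0 < stdPdf x := stdPdf_pos x
  have hstep1 : 1 + 2*x*stdPdf x ≤ 1 - 2*t1*(0.3984*A4 t2) := by
    have : 2*t1*(0.3984*A4 t2) ≤ 2*(-x)*stdPdf x := by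
      apply mul_le_mul (by linarith) hφL (by positivity) (by linarith)
    linarith
  calc stdCdf x * (1 + 2*x*stdPdf x) ≤ stdCdf x * (1 - 2*t1*(0.3984*A4 t2)) :=
        mul_le_mul_of_nonneg_left hstep1 hΦ0
  _ ≤ (1/2 - 0.3984*B4 t1) * (1 - 2*t1*(0.3984*A4 t2)) := mul_le_mul_of_nonneg_right hΦU hD
  _ < 2*(0.3984*A4 t2)^2 := hnum
  _ ≤ 2*stdPdf x^2 := by nlinarith [hφL, hφ0]

lemma middle_region {x : ℝ} (h1 : -1 ≤ x) (h2 : x ≤ -1/2) :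
    stdCdf x * (1 + 2*x*stdPdf x) < 2*stdPdf x^2 := by
  rcases le_total x (-(15/16)) with h | h
  · exact mid_step (t1 := 15/16) (t2 := 1) (by norm_num) (by norm_num) (by linarith) (by linarith)
      (by norm_num [B4]) (by norm_num [A4]) (by norm_num [B4, A4]) (by norm_num [B4, A4])
  rcases le_total x (-(7/8)) with h | h
  · exact mid_step (t1 := 7/8) (t2 := 15/16) (by norm_num) (by norm_num) (by linarith) (by linarith)
      (by norm_num [B4]) (by norm_num [A4]) (by norm_num [B4, A4]) (by norm_num [B4, A4])
  rcases le_total x (-(13/16)) with h | h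
  · exact mid_step (t1 := 13/16) (t2 := 7/8) (by norm_num) (by norm_num) (by linarith) (by linarith)
      (by norm_num [B4]) (by norm_num [A4]) (by norm_num [B4, A4]) (by norm_num [B4, A4])
  rcases le_total x (-(3/4)) with h | h
  · exact mid_step (t1 := 3/4) (t2 := 13/16) (by norm_num) (by norm_num) (by linarith) (by linarith)
      (by norm_num [B4]) (by norm_num [A4]) (by norm_num [B4, A4]) (by norm_num [B4, A4])
  rcases le_total x (-(11/16)) with h | h
  · exact mid_step (t1 := 11/16) (t2 := 3/4) (by norm_num) (by norm_num) (by linarith) (by linarith)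
      (by norm_num [B4]) (by norm_num [A4]) (by norm_num [B4, A4]) (by norm_num [B4, A4])
  rcases le_total x (-(5/8)) with h | h
  · exact mid_step (t1 := 5/8) (t2 := 11/16) (by norm_num) (by norm_num) (by linarith) (by linarith)
      (by norm_num [B4]) (by norm_num [A4]) (by norm_num [B4, A4]) (by norm_num [B4, A4])
  rcases le_total x (-(9/16)) with h | h
  · exact mid_step (t1 := 9/16) (t2 := 5/8) (by norm_num) (by norm_num) (by linarith) (by linarith)
      (by norm_num [B4]) (by norm_num [A4]) (by norm_num [B4, A4]) (by norm_num [B4, A4])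
  exact mid_step (t1 := 1/2) (t2 := 9/16) (by norm_num) (by norm_num) (by linarith) (by linarith)
    (by norm_num [B4]) (by norm_num [A4]) (by norm_num [B4, A4]) (by norm_num [B4, A4])

lemma hasDerivAt_g (x : ℝ) : HasDerivAt g
    (2*stdPdf x^2 - stdCdf x * (1 + 2*x*stdPdf x)) x := by
  have h1 : HasDerivAt (fun y : ℝ => -y * stdCdf y)
      (-1 * stdCdf x + -x * stdPdf x) x :=
    ((hasDerivAt_id x).neg).mul (hasDerivAt_stdCdf x)
  have hc : HasDerivAt (fun y : ℝ => 1 - 2 * stdCdf y) (-(2 * stdPdf x)) x :=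
    ((hasDerivAt_stdCdf x).const_mul 2).const_sub 1
  have h2 : HasDerivAt (fun y : ℝ => stdPdf y * (1 - 2 * stdCdf y))
      ((-x * stdPdf x) * (1 - 2 * stdCdf x) + stdPdf x * (-(2 * stdPdf x))) x :=
    (hasDerivAt_stdPdf x).mul hc
  have := h1.sub h2
  refine this.congr_deriv ?_
  ring

lemma continuous_g : Continuous g := by
  rw [continuous_iff_continuousAt]
  exact fun x => (hasDerivAt_g x).continuousAt

lemma strictMonoOn_g : StrictMonoOn g (Icc (-1) (-1/2)) := by
  apply strictMonoOn_of_deriv_pos (convex_Icc _ _) continuous_g.continuousOn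
  intro x hx
  rw [interior_Icc] at hx
  rw [(hasDerivAt_g x).deriv]
  have := middle_region hx.1.le hx.2.le
  linarith

lemma g_root_mem {y : ℝ} (hy : y < 0) (hg : g y = 0) : y ∈ Ioo (-1 : ℝ) (-1/2) := by
  constructor
  · by_contra h
    push_neg at h
    have := left_region h
    linarith
  · by_contra h
    push_neg at h
    have := right_region h hy
    linarith

lemma exists_unique_g_root : ∃! x : ℝ, x < 0 ∧ g x = 0 := by
  have hivt : (0:ℝ) ∈ Ioo (g (-1)) (g (-1/2)) := by
    constructor
    · exact left_region le_rfl
    · exact right_region le_rfl (by norm_num)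
  have hsub := intermediate_value_Ioo (by norm_num : (-1:ℝ) ≤ -1/2)
    continuous_g.continuousOn
  obtain ⟨c, hc, hgc⟩ := hsub hivt
  refine ⟨c, ⟨by linarith [hc.2], hgc⟩, ?_⟩
  rintro y ⟨hy0, hgy⟩
  have hymem := g_root_mem hy0 hgy
  have hcmem : c ∈ Icc (-1:ℝ) (-1/2) := ⟨hc.1.le, hc.2.le⟩
  have hymem' : y ∈ Icc (-1:ℝ) (-1/2) := ⟨hymem.1.le, hymem.2.le⟩
  exact strictMonoOn_g.injOn hymem' hcmem (by rw [hgy, hgc])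

lemma eq_iff_g_eq {x : ℝ} (hx : x < 0) :
    (1 - x * stdPdf x / stdCdf x - (stdPdf x) ^ 2 / (stdCdf x) ^ 2 =
        1 + 2 * x * stdPdf x / (1 - 2 * stdCdf x)) ↔ g x = 0 := by
  have hΦ : 0 < stdCdf x := stdCdf_pos x
  have hΦh : stdCdf x < 1/2 := stdCdf_lt_half hx
  have hφ : 0 < stdPdf x := stdPdf_pos x
  have hD : (0:ℝ) < 1 - 2 * stdCdf x := by linarith
  have key : (1 - x * stdPdf x / stdCdf x - (stdPdf x) ^ 2 / (stdCdf x) ^ 2) -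
      (1 + 2 * x * stdPdf x / (1 - 2 * stdCdf x)) =
      stdPdf x * g x / ((stdCdf x)^2 * (1 - 2 * stdCdf x)) := by
    have hD' := hD.ne'
    have hD'' : 1 - stdCdf x * 2 ≠ 0 := by intro h0; linarith
    unfold g
    field_simp
    ring
  constructor
  · intro h
    have h0 : stdPdf x * g x / ((stdCdf x)^2 * (1 - 2 * stdCdf x)) = 0 := by
      rw [← key]; linarith
    have hden : (stdCdf x)^2 * (1 - 2 * stdCdf x) ≠ 0 := by positivity
    rcases div_eq_zero_iff.1 h0 with h1 | h1
    · rcases mul_eq_zero.1 h1 with h2 | h2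
      · exact absurd h2 (ne_of_gt hφ)
      · exact h2
    · exact absurd h1 hden
  · intro h
    have : (1 - x * stdPdf x / stdCdf x - (stdPdf x) ^ 2 / (stdCdf x) ^ 2) -
        (1 + 2 * x * stdPdf x / (1 - 2 * stdCdf x)) = 0 := by
      rw [key, h]; simp
    linarith

/-- There exists a unique `x < 0` at which the tail conditional variance of a standard
normal equals the central conditional variance; equivalently, there is a unique negative
solution of `-xΦ(x) = φ(x)(1 - 2Φ(x))`. -/
theorem stmt_9 :
    (∃! x : ℝ, x < 0 ∧
      1 - x * stdPdf x / stdCdf x - (stdPdf x) ^ 2 / (stdCdf x) ^ 2 =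
        1 + 2 * x * stdPdf x / (1 - 2 * stdCdf x)) ∧
    (∃! x : ℝ, x < 0 ∧ -x * stdCdf x = stdPdf x * (1 - 2 * stdCdf x)) := by
  have hQ : ∀ x : ℝ, (-x * stdCdf x = stdPdf x * (1 - 2 * stdCdf x)) ↔ g x = 0 := by
    intro x
    unfold g
    constructor
    · intro h; rw [h]; ring
    · intro h; linarith [h]
  have h2 : ∃! x : ℝ, x < 0 ∧ -x * stdCdf x = stdPdf x * (1 - 2 * stdCdf x) := by
    apply (existsUnique_congr (fun x => ?_)).2 exists_unique_g_root
    exact and_congr_right (fun hx => hQ x)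
  refine ⟨?_, h2⟩
  apply (existsUnique_congr (fun x => ?_)).2 exists_unique_g_root
  exact and_congr_right (fun hx => eq_iff_g_eq hx)
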